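/- Let Z ∼ N(0,1) and let soft(x,r) = sign(x)·max(|x|−r,0). Then for all a ∈ ℝ and r > 0, E[Z · soft(Z + a, r)] = Φ(a − r) + Φ(−a − r), where Φ is the standard normal CDF. -/

import Mathlib

open MeasureTheory ProbabilityTheory
open scoped NNReal ENNReal

/-- The soft-thresholding function `soft(x,r) = sign(x) · max(|x|−r, 0)`. -/
noncomputable def soft (x r : ℝ) : ℝ := Real.sign x * max (|x| - r) 0

noncomputable def stdg (x : ℝ) : ℝ := (Real.sqrt (2 * Real.pi))⁻¹ * Real.exp (-(2⁻¹) * x ^ 2)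

lemma stdg_eq : gaussianPDFReal 0 1 = stdg := by
  funext x
  simp only [gaussianPDFReal, stdg, NNReal.coe_one, mul_one, sub_zero]
  ring_nf

lemma stdg_nonneg (x : ℝ) : 0 ≤ stdg x :=
  mul_nonneg (inv_nonneg.2 (Real.sqrt_nonneg _)) (Real.exp_pos _).le

lemma stdg_deriv (x : ℝ) : HasDerivAt stdg (-x * stdg x) x := by
  have h1 : HasDerivAt (fun x : ℝ => -(2⁻¹ : ℝ) * x ^ 2) (-x) x := by
    have := (hasDerivAt_pow 2 x).const_mul (-(2⁻¹ : ℝ))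
    exact this.congr_deriv (by push_cast; ring)
  have h2 := (h1.exp).const_mul ((Real.sqrt (2 * Real.pi))⁻¹)
  exact h2.congr_deriv (by simp only [stdg]; ring)

lemma integrable_stdg : Integrable stdg := by
  rw [← stdg_eq]; exact integrable_gaussianPDFReal 0 1

lemma integrable_mul_stdg : Integrable fun x => x * stdg x := by
  have := (integrable_mul_exp_neg_mul_sq (b := 2⁻¹) (by norm_num)).const_mul
    ((Real.sqrt (2 * Real.pi))⁻¹)
  refine this.congr (Filter.Eventually.of_forall fun x => ?_)
  simp only [stdg]; ring

lemma integrable_sq_stdg : Integrable fun x => x ^ 2 * stdg x := by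
  have h := (integrable_rpow_mul_exp_neg_mul_sq (b := 2⁻¹) (by norm_num) (s := 2)
    (by norm_num)).const_mul ((Real.sqrt (2 * Real.pi))⁻¹)
  refine h.congr (Filter.Eventually.of_forall fun x => ?_)
  simp only [Real.rpow_two, stdg]; ring

lemma integrable_poly_stdg (b : ℝ) : Integrable fun x => x * (x + b) * stdg x := by
  have h := integrable_sq_stdg.add (integrable_mul_stdg.const_mul b)
  refine h.congr (Filter.Eventually.of_forall fun x => ?_)
  simp only [Pi.add_apply, stdg]; ring

lemma hasDerivAt_H (b x : ℝ) :
    HasDerivAt (fun z => -(z + b) * stdg z) (x * (x + b) * stdg x - stdg x) x := by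
  have h1 : HasDerivAt (fun z : ℝ => -(z + b)) (-1) x := ((hasDerivAt_id x).add_const b).neg
  have h2 := h1.mul (stdg_deriv x)
  exact h2.congr_deriv (by ring)

lemma tendsto_H_cocompact (b : ℝ) :
    Filter.Tendsto (fun z => -(z + b) * stdg z) (Filter.cocompact ℝ) (nhds 0) := by
  have T1 : Filter.Tendsto (fun x : ℝ => |x| ^ (1 : ℝ) * Real.exp (-(2⁻¹) * x ^ 2))
      (Filter.cocompact ℝ) (nhds 0) :=
    tendsto_rpow_abs_mul_exp_neg_mul_sq_cocompact (by norm_num) 1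
  have T0 : Filter.Tendsto (fun x : ℝ => |x| ^ (0 : ℝ) * Real.exp (-(2⁻¹) * x ^ 2))
      (Filter.cocompact ℝ) (nhds 0) :=
    tendsto_rpow_abs_mul_exp_neg_mul_sq_cocompact (by norm_num) 0
  simp only [Real.rpow_one] at T1
  simp only [Real.rpow_zero, one_mul] at T0
  have Tsum := (T1.add (T0.const_mul |b|)).const_mul ((Real.sqrt (2 * Real.pi))⁻¹)
  simp only [mul_zero, add_zero] at Tsum
  refine squeeze_zero_norm (fun z => ?_) Tsum
  have hC : (0:ℝ) ≤ (Real.sqrt (2 * Real.pi))⁻¹ := inv_nonneg.2 (Real.sqrt_nonneg _)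
  have he : (0:ℝ) ≤ Real.exp (-(2⁻¹) * z ^ 2) := (Real.exp_pos _).le
  have habs : |z + b| ≤ |z| + |b| := abs_add_le _ _
  calc ‖-(z + b) * stdg z‖ = |z + b| * stdg z := by
        rw [Real.norm_eq_abs, abs_mul, abs_neg, abs_of_nonneg (stdg_nonneg z)]
    _ ≤ (|z| + |b|) * stdg z := mul_le_mul_of_nonneg_right habs (stdg_nonneg z)
    _ = (Real.sqrt (2 * Real.pi))⁻¹ *
        (|z| * Real.exp (-(2⁻¹) * z ^ 2) + |b| * Real.exp (-(2⁻¹) * z ^ 2)) := by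
        simp only [stdg]; ring

lemma key_Ioi (b : ℝ) :
    ∫ z in Set.Ioi (-b), z * (z + b) * stdg z = ∫ z in Set.Ioi (-b), stdg z := by
  have hint : IntegrableOn (fun z => z * (z + b) * stdg z - stdg z) (Set.Ioi (-b)) :=
    ((integrable_poly_stdg b).sub integrable_stdg).integrableOn
  have htop : Filter.Tendsto (fun z => -(z + b) * stdg z) Filter.atTop (nhds 0) :=
    (tendsto_H_cocompact b).mono_left atTop_le_cocompact
  have h := integral_Ioi_of_hasDerivAt_of_tendsto' (a := -b)
    (f := fun z => -(z + b) * stdg z) (f' := fun z => z * (z + b) * stdg z - stdg z)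
    (fun x _ => hasDerivAt_H b x) hint htop
  simp only [neg_add_cancel, neg_zero, zero_mul, sub_zero, zero_sub, neg_eq_zero] at h
  rw [integral_sub (integrable_poly_stdg b).integrableOn integrable_stdg.integrableOn] at h
  linarith [h]

lemma key_Iic (b : ℝ) :
    ∫ z in Set.Iic (-b), z * (z + b) * stdg z = ∫ z in Set.Iic (-b), stdg z := by
  have hint : IntegrableOn (fun z => z * (z + b) * stdg z - stdg z) (Set.Iic (-b)) :=
    ((integrable_poly_stdg b).sub integrable_stdg).integrableOn
  have hbot : Filter.Tendsto (fun z => -(z + b) * stdg z) Filter.atBot (nhds 0) :=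
    (tendsto_H_cocompact b).mono_left atBot_le_cocompact
  have h := integral_Iic_of_hasDerivAt_of_tendsto' (a := -b)
    (f := fun z => -(z + b) * stdg z) (f' := fun z => z * (z + b) * stdg z - stdg z)
    (fun x _ => hasDerivAt_H b x) hint hbot
  simp only [neg_add_cancel, neg_zero, zero_mul, sub_zero] at h
  rw [integral_sub (integrable_poly_stdg b).integrableOn integrable_stdg.integrableOn] at h
  linarith [h]

lemma stdg_even (x : ℝ) : stdg (-x) = stdg x := by simp [stdg]

lemma stdg_symm (c : ℝ) : ∫ z in Set.Ioi c, stdg z = ∫ z in Set.Iic (-c), stdg z := by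
  have h := integral_comp_neg_Ioi c stdg
  simpa only [stdg_even] using h

lemma gauss_Iic (t : ℝ) :
    (gaussianReal 0 1 (Set.Iic t)).toReal = ∫ z in Set.Iic t, stdg z := by
  rw [gaussianReal_apply_eq_integral 0 one_ne_zero, ENNReal.toReal_ofReal
    (setIntegral_nonneg measurableSet_Iic fun x _ => gaussianPDFReal_nonneg 0 1 x), stdg_eq]

/-- Stein-type identity: for `Z ∼ N(0,1)`,
`E[Z · soft(Z + a, r)] = Φ(a − r) + Φ(−a − r)` where `Φ` is the standard normal CDF. -/
theorem stein_soft (a r : ℝ) (hr : 0 < r) :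
    ∫ z, z * soft (z + a) r ∂(gaussianReal 0 1) =
      (gaussianReal 0 1 (Set.Iic (a - r))).toReal +
      (gaussianReal 0 1 (Set.Iic (-a - r))).toReal := by
  set c : ℝ := r - a with hc
  set d : ℝ := -r - a with hd
  have hdc : d ≤ c := by simp only [hc, hd]; linarith
  -- convert to a Lebesgue integral against the density
  have hdens : ∫ z, z * soft (z + a) r ∂(gaussianReal 0 1)
      = ∫ z, (z * soft (z + a) r) * stdg z := by
    rw [gaussianReal_of_var_ne_zero 0 one_ne_zero]
    have hpdf : gaussianPDF 0 1
        = fun z => ((Real.toNNReal (gaussianPDFReal 0 1 z) : ℝ≥0) : ℝ≥0∞) := rfl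
    rw [hpdf, integral_withDensity_eq_integral_smul
      (measurable_gaussianPDFReal 0 1).real_toNNReal]
    refine integral_congr_ae (Filter.Eventually.of_forall fun z => ?_)
    simp only [stdg_eq, NNReal.smul_def, Real.coe_toNNReal _ (stdg_nonneg z), smul_eq_mul]
    ring
  -- piecewise descriptions
  have hEqIic : Set.EqOn (fun z => z * (z + (a + r)) * stdg z)
      (fun z => (z * soft (z + a) r) * stdg z) (Set.Iic d) := by
    intro z hz
    have h1 : z + a ≤ -r := by simp only [Set.mem_Iic, hd] at hz ⊢; linarith
    have h2 : z + a < 0 := lt_of_le_of_lt h1 (by linarith)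
    simp only [soft, Real.sign_of_neg h2, abs_of_neg h2]
    rw [max_eq_left (by linarith)]
    ring
  have hEqIoi : Set.EqOn (fun z => z * (z + (a - r)) * stdg z)
      (fun z => (z * soft (z + a) r) * stdg z) (Set.Ioi c) := by
    intro z hz
    have h1 : r ≤ z + a := by simp only [Set.mem_Ioi, hc] at hz ⊢; linarith
    have h2 : 0 < z + a := lt_of_lt_of_le hr h1
    simp only [soft, Real.sign_of_pos h2, abs_of_pos h2]
    rw [max_eq_left (by linarith)]
    ring
  have hEqMid : Set.EqOn (fun _ : ℝ => (0:ℝ))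
      (fun z => (z * soft (z + a) r) * stdg z) (Set.Ioc d c) := by
    intro z hz
    obtain ⟨hz1, hz2⟩ := hz
    have h1 : |z + a| ≤ r := by
      rw [abs_le]
      constructor <;> [skip; skip] <;> simp only [hd, hc] at hz1 hz2 <;> linarith
    simp only [soft]
    rw [max_eq_right (by linarith)]
    simp
  -- integrability on pieces
  have hIicInt : IntegrableOn (fun z => (z * soft (z + a) r) * stdg z) (Set.Iic d) :=
    ((integrable_poly_stdg (a + r)).integrableOn).congr_fun hEqIic measurableSet_Iic
  have hIoiInt : IntegrableOn (fun z => (z * soft (z + a) r) * stdg z) (Set.Ioi c) :=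
    ((integrable_poly_stdg (a - r)).integrableOn).congr_fun hEqIoi measurableSet_Ioi
  have hMidInt : IntegrableOn (fun z => (z * soft (z + a) r) * stdg z) (Set.Ioc d c) :=
    (integrableOn_zero).congr_fun hEqMid measurableSet_Ioc
  have hIoidInt : IntegrableOn (fun z => (z * soft (z + a) r) * stdg z) (Set.Ioi d) := by
    rw [← Set.Ioc_union_Ioi_eq_Ioi hdc]
    exact hMidInt.union hIoiInt
  rw [hdens]
  have hsplit1 : ∫ z, (z * soft (z + a) r) * stdg z
      = (∫ z in Set.Iic d, (z * soft (z + a) r) * stdg z)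
        + ∫ z in Set.Ioi d, (z * soft (z + a) r) * stdg z :=
    (intervalIntegral.integral_Iic_add_Ioi hIicInt hIoidInt).symm
  have hsplit2 : ∫ z in Set.Ioi d, (z * soft (z + a) r) * stdg z
      = (∫ z in Set.Ioc d c, (z * soft (z + a) r) * stdg z)
        + ∫ z in Set.Ioi c, (z * soft (z + a) r) * stdg z := by
    rw [← Set.Ioc_union_Ioi_eq_Ioi hdc]
    exact setIntegral_union (Set.Ioc_disjoint_Ioi le_rfl) measurableSet_Ioi hMidInt hIoiInt
  have hmid0 : ∫ z in Set.Ioc d c, (z * soft (z + a) r) * stdg z = 0 := by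
    rw [← setIntegral_congr_fun measurableSet_Ioc hEqMid]
    simp
  have hIic : ∫ z in Set.Iic d, (z * soft (z + a) r) * stdg z
      = (gaussianReal 0 1 (Set.Iic (-a - r))).toReal := by
    rw [← setIntegral_congr_fun measurableSet_Iic hEqIic]
    have hda : d = -(a + r) := by rw [hd]; ring
    rw [hda, key_Iic (a + r), gauss_Iic]
    norm_num
    congr 1
    ring
  have hIoi : ∫ z in Set.Ioi c, (z * soft (z + a) r) * stdg z
      = (gaussianReal 0 1 (Set.Iic (a - r))).toReal := by
    rw [← setIntegral_congr_fun measurableSet_Ioi hEqIoi]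
    have hca : c = -(a - r) := by rw [hc]; ring
    rw [hca, key_Ioi (a - r), stdg_symm, gauss_Iic]
    norm_num
  rw [hsplit1, hsplit2, hmid0, hIic, hIoi]
  ring
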